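/- Let g be a piecewise linear unimodal map topologically conjugate to the tent map f via a homeomorphism h with h ∘ f = g ∘ h, let t ≥ 2 be an integer that is not a power of 2, and suppose ψ_t = h ∘ ξ_t ∘ h^{−1} is piecewise linear. Then ψ_t′(0) = (g′(0))^{log₂ t}. -/

import Mathlib

open Set

/-- The tent map `x ↦ 1 - |1 - 2x|`. -/
noncomputable def tent (x : ℝ) : ℝ := 1 - |1 - 2*x|

/-- `g` is unimodal with turning point `v`. -/
def IsUnimodalWith (g : ℝ → ℝ) (v : ℝ) : Prop :=
  ContinuousOn g (Icc 0 1) ∧ MapsTo g (Icc 0 1) (Icc 0 1) ∧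
  v ∈ Ioo (0:ℝ) 1 ∧ StrictMonoOn g (Icc 0 v) ∧ StrictAntiOn g (Icc v 1) ∧
  g 0 = 0 ∧ g 1 = 0 ∧ g v = 1

/-- `g` is unimodal. -/
def IsUnimodal (g : ℝ → ℝ) : Prop := ∃ v, IsUnimodalWith g v

/-- `φ` is piecewise linear on `[0,1]`. -/
def IsPiecewiseLinear (φ : ℝ → ℝ) : Prop :=
  ∃ (m : ℕ) (a : ℕ → ℝ), 0 < m ∧ a 0 = 0 ∧ a m = 1 ∧
    (∀ i < m, a i < a (i+1)) ∧
    ∀ i < m, ∃ c d : ℝ, ∀ x ∈ Icc (a i) (a (i+1)), φ x = c * x + d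
/-- `φ` is affine on `[s,e]`. -/
def LinOnIcc (φ : ℝ → ℝ) (s e : ℝ) : Prop := ∃ c d : ℝ, ∀ x ∈ Icc s e, φ x = c * x + d

/-- `a` is the first (smallest) positive kink of `φ`:
`φ` is linear on `[0,a]` and on no larger interval `[0,c]`. -/
def FirstKink (φ : ℝ → ℝ) (a : ℝ) : Prop :=
  0 < a ∧ LinOnIcc φ 0 a ∧ ∀ c, a < c → ¬ LinOnIcc φ 0 c

/-- The complete preimage of `0` under `g` (inside `[0,1]`). -/
def preimZero (g : ℝ → ℝ) : Set ℝ :=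
  {x | x ∈ Icc (0:ℝ) 1 ∧ ∃ n : ℕ, 1 ≤ n ∧ g^[n] x = 0}

/-- The map `ξ_t`. -/
noncomputable def xi (t : ℕ) (x : ℝ) : ℝ :=
  (1 - (-1:ℝ) ^ ⌊(t:ℝ) * x⌋) / 2 + (-1:ℝ) ^ ⌊(t:ℝ) * x⌋ * Int.fract ((t:ℝ) * x)

/-- `μ n k` enumerates, in increasing order, the `2^(n-1)+1` points of `g^{-n}(0)`. -/
def IsMuFamily (g : ℝ → ℝ) (μ : ℕ → ℕ → ℝ) : Prop :=
  ∀ n : ℕ, 1 ≤ n →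
    (∀ k ≤ 2^(n-1), μ n k ∈ Icc (0:ℝ) 1 ∧ g^[n] (μ n k) = 0) ∧
    (∀ k < 2^(n-1), μ n k < μ n (k+1)) ∧
    (∀ x ∈ Icc (0:ℝ) 1, g^[n] x = 0 → ∃ k ≤ 2^(n-1), x = μ n k)

/-- `ψ` is monotone (in either direction) on `s`. -/
def MonoOrAntiOn (ψ : ℝ → ℝ) (s : Set ℝ) : Prop := MonotoneOn ψ s ∨ AntitoneOn ψ s

/-- `[c,d]` is a maximal interval of monotonicity of `ψ` in `[0,1]`. -/
def IsMaxMonoInterval (ψ : ℝ → ℝ) (c d : ℝ) : Prop :=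
  0 ≤ c ∧ c < d ∧ d ≤ 1 ∧ MonoOrAntiOn ψ (Icc c d) ∧
  ∀ c' d', 0 ≤ c' → d' ≤ 1 → Icc c d ⊆ Icc c' d' → Icc c d ≠ Icc c' d' →
    ¬ MonoOrAntiOn ψ (Icc c' d')

/-- `ψ` has exactly `N` maximal intervals of monotonicity, cut at points `b 0 < ⋯ < b N`. -/
def HasExactlyMonoIntervals (ψ : ℝ → ℝ) (N : ℕ) : Prop :=
  ∃ b : ℕ → ℝ, b 0 = 0 ∧ b N = 1 ∧ (∀ i < N, b i < b (i+1)) ∧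
    (∀ i < N, MonoOrAntiOn ψ (Icc (b i) (b (i+1)))) ∧
    (∀ i, i + 2 ≤ N → ¬ MonoOrAntiOn ψ (Icc (b i) (b (i+2))))
set_option maxHeartbeats 1000000 in
/-- if `ψ_t = h ∘ ξ_t ∘ h⁻¹` is piecewise linear (with `t` not a power
of 2), then `ψ_t′(0) = (g′(0))^(log₂ t)`. -/
theorem psi_t_slope_at_zero
    (g h hinv ψt : ℝ → ℝ) (t : ℕ) (sg sψ : ℝ)
    (hg : IsUnimodal g) (hgPL : IsPiecewiseLinear g)
    (hhc : ContinuousOn h (Icc 0 1)) (hhb : BijOn h (Icc 0 1) (Icc 0 1))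
    (hconj : ∀ x ∈ Icc (0:ℝ) 1, h (tent x) = g (h x))
    (hinvl : ∀ x ∈ Icc (0:ℝ) 1, hinv (h x) = x)
    (hinvr : ∀ x ∈ Icc (0:ℝ) 1, h (hinv x) = x)
    (ht : 2 ≤ t) (htp : ¬ ∃ j : ℕ, t = 2^j)
    (hψt : ∀ x ∈ Icc (0:ℝ) 1, ψt x = h (xi t (hinv x)))
    (hψtPL : IsPiecewiseLinear ψt)
    (hsg : ∃ a : ℝ, 0 < a ∧ ∀ x ∈ Icc (0:ℝ) a, g x = sg * x)
    (hsψ : ∃ q : ℝ, 0 < q ∧ ∀ x ∈ Icc (0:ℝ) q, ψt x = sψ * x) :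
    sψ = sg ^ (Real.logb 2 t) := by
  obtain ⟨v, hgc, hgm, hv, hgmono, hganti, hg0, hg1, hgv⟩ := hg
  have htR : (2:ℝ) ≤ (t:ℝ) := by exact_mod_cast ht
  have htpos : (0:ℝ) < (t:ℝ) := by linarith
  obtain ⟨hmaps, hinj, hsurj⟩ := hhb
  -- h is strictly monotone; rule out the antitone case
  rcases hhc.strictMonoOn_of_injOn_Icc' (by norm_num) hinj with hsm | hsa
  swap
  · exfalso
    obtain ⟨x, hx, hx1⟩ := hsurj (show (1:ℝ) ∈ Icc (0:ℝ) 1 by norm_num)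
    have h0le : h 0 ≤ 1 := (hmaps (by norm_num : (0:ℝ) ∈ Icc (0:ℝ) 1)).2
    have hxle : h x ≤ h 0 := by
      rcases eq_or_lt_of_le hx.1 with e | l
      · rw [← e]
      · exact (hsa (by norm_num) hx l).le
    have h01 : h 0 = 1 := le_antisymm h0le (by rw [← hx1]; exact hxle)
    have hc0 := hconj 0 (by norm_num)
    have ht0 : tent 0 = 0 := by simp [tent]
    rw [ht0, h01] at hc0
    rw [hg1] at hc0
    norm_num at hc0
  have hmonoOn : MonotoneOn h (Icc 0 1) := hsm.monotoneOn
  have h0 : h 0 = 0 := by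
    obtain ⟨x, hx, hx0⟩ := hsurj (show (0:ℝ) ∈ Icc (0:ℝ) 1 by norm_num)
    have h0ge : 0 ≤ h 0 := (hmaps (by norm_num : (0:ℝ) ∈ Icc (0:ℝ) 1)).1
    have : h 0 ≤ h x := hmonoOn (by norm_num) hx hx.1
    rw [hx0] at this
    linarith
  obtain ⟨a, hapos, hga⟩ := hsg
  obtain ⟨q, hqpos, hψq⟩ := hsψ
  set r : ℝ := min (min a q) 1 with hrdef
  have hrpos : 0 < r := lt_min (lt_min hapos hqpos) one_pos
  have hra : r ≤ a := le_trans (min_le_left _ _) (min_le_left _ _)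
  have hrq : r ≤ q := le_trans (min_le_left _ _) (min_le_right _ _)
  have hr1 : r ≤ 1 := min_le_right _ _
  obtain ⟨w, hw, hwr⟩ := hsurj (show r/2 ∈ Icc (0:ℝ) 1 by constructor <;> linarith)
  have hwpos : 0 < w := by
    rcases eq_or_lt_of_le hw.1 with e | l
    · exfalso; rw [← e, h0] at hwr; linarith
    · exact l
  set δ : ℝ := min w (1/(2*(t:ℝ))) with hδdef
  have hδpos : 0 < δ := lt_min hwpos (by positivity)
  have hδw : δ ≤ w := min_le_left _ _
  have htδ : (t:ℝ) * δ ≤ 1/2 := by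
    calc (t:ℝ) * δ ≤ (t:ℝ) * (1/(2*(t:ℝ))) :=
          mul_le_mul_of_nonneg_left (min_le_right _ _) htpos.le
      _ = 1/2 := by field_simp
  have h2δ : 2*δ ≤ (t:ℝ)*δ := mul_le_mul_of_nonneg_right htR hδpos.le
  have hδ14 : δ ≤ 1/4 := by linarith
  have hδ1 : δ ≤ 1 := by linarith
  have hδmem : δ ∈ Icc (0:ℝ) 1 := ⟨hδpos.le, hδ1⟩
  have hhδr : h δ ≤ r/2 := by
    have := hmonoOn hδmem ⟨hw.1, hw.2⟩ hδw
    rw [hwr] at this; exact this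
  -- positivity of h on (0, 1]
  have hpos : ∀ x : ℝ, 0 < x → x ≤ 1 → 0 < h x := by
    intro x hx hx1
    have := hsm (by norm_num : (0:ℝ) ∈ Icc (0:ℝ) 1) ⟨hx.le, hx1⟩ hx
    rw [h0] at this; exact this
  have hhδpos : 0 < h δ := hpos δ hδpos hδ1
  -- bounds of h on [0, δ]
  have hhx_le : ∀ x ∈ Icc (0:ℝ) δ, 0 ≤ h x ∧ h x ≤ r/2 := by
    intro x hx
    constructor
    · rw [← h0]; exact hmonoOn (by norm_num) ⟨hx.1, le_trans hx.2 hδ1⟩ hx.1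
    · exact le_trans (hmonoOn ⟨hx.1, le_trans hx.2 hδ1⟩ hδmem hx.2) hhδr
  -- the two functional relations near 0
  have R2 : ∀ x ∈ Icc (0:ℝ) δ, h (2*x) = sg * h x := by
    intro x hx
    obtain ⟨hx0, hxδ⟩ := hx
    have h2x : 2*x ≤ 1/2 := by linarith
    have htent : tent x = 2*x := by
      unfold tent
      rw [abs_of_nonneg (by linarith)]; ring
    have e := hconj x ⟨hx0, by linarith⟩
    rw [htent] at e
    rw [e]
    obtain ⟨hh0, hhr⟩ := hhx_le x ⟨hx0, hxδ⟩
    exact hga (h x) ⟨hh0, by linarith⟩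
  have Rt : ∀ x ∈ Icc (0:ℝ) δ, h ((t:ℝ)*x) = sψ * h x := by
    intro x hx
    obtain ⟨hx0, hxδ⟩ := hx
    have htx : (t:ℝ)*x ≤ 1/2 :=
      le_trans (mul_le_mul_of_nonneg_left hxδ htpos.le) htδ
    have htx0 : 0 ≤ (t:ℝ)*x := by positivity
    have hxmem : x ∈ Icc (0:ℝ) 1 := ⟨hx0, by linarith⟩
    obtain ⟨hh0, hhr⟩ := hhx_le x ⟨hx0, hxδ⟩
    have e1 := hψt (h x) (hmaps hxmem)
    rw [hinvl x hxmem] at e1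
    have hfl : ⌊(t:ℝ)*x⌋ = 0 := Int.floor_eq_zero_iff.mpr ⟨htx0, by linarith⟩
    have hxi : xi t x = (t:ℝ)*x := by
      unfold xi
      rw [hfl, Int.fract_eq_self.mpr ⟨htx0, by linarith⟩]
      norm_num
    have e2 := hψq (h x) ⟨hh0, by linarith⟩
    rw [hxi] at e1
    rw [← e1, e2]
  -- sg > 1 and sψ > 1
  have hsg1 : 1 < sg := by
    have e := R2 δ ⟨hδpos.le, le_rfl⟩
    have hlt : h δ < h (2*δ) :=
      hsm hδmem ⟨by linarith, by linarith⟩ (by linarith)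
    rw [e] at hlt
    exact (mul_lt_mul_iff_of_pos_right hhδpos).mp (by rw [one_mul]; exact hlt)
  have hsψ1 : 1 < sψ := by
    have e := Rt δ ⟨hδpos.le, le_rfl⟩
    have hlt : h δ < h ((t:ℝ)*δ) :=
      hsm hδmem ⟨by positivity, by linarith⟩ (by linarith)
    rw [e] at hlt
    exact (mul_lt_mul_iff_of_pos_right hhδpos).mp (by rw [one_mul]; exact hlt)
  have hsgpos : 0 < sg := by linarith
  have hsψpos : 0 < sψ := by linarith
  -- iterated relations (descending)
  have L1 : ∀ m : ℕ, ∀ x ∈ Icc (0:ℝ) δ, h x = sg^m * h (x / 2^m) := by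
    intro m
    induction m with
    | zero => intro x _; simp
    | succ m ih =>
      intro x hx
      have hx2 : x/2 ∈ Icc (0:ℝ) δ := ⟨by linarith [hx.1], by linarith [hx.1, hx.2]⟩
      have e := R2 (x/2) hx2
      rw [show 2*(x/2) = x by ring] at e
      rw [e, ih (x/2) hx2, show x/2/2^m = x/2^(m+1) by rw [pow_succ]; ring]
      ring
  have L2 : ∀ n : ℕ, ∀ x ∈ Icc (0:ℝ) δ, h x = sψ^n * h (x / (t:ℝ)^n) := by
    intro n
    induction n with
    | zero => intro x _; simp
    | succ n ih =>
      intro x hx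
      have hxt : x/(t:ℝ) ∈ Icc (0:ℝ) δ :=
        ⟨div_nonneg hx.1 htpos.le, le_trans (div_le_self hx.1 (by linarith)) hx.2⟩
      have e := Rt (x/(t:ℝ)) hxt
      rw [show (t:ℝ)*(x/(t:ℝ)) = x by field_simp] at e
      rw [e, ih (x/(t:ℝ)) hxt,
        show x/(t:ℝ)/(t:ℝ)^n = x/(t:ℝ)^(n+1) by rw [pow_succ]; ring]
      ring
  set Lg := Real.log sg with hLg
  set L2r := Real.log 2 with hL2r
  set Lt := Real.log (t:ℝ) with hLt
  set Lψ := Real.log sψ with hLψ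
  have hLgpos : 0 < Lg := Real.log_pos hsg1
  have hL2pos : 0 < L2r := Real.log_pos (by norm_num)
  set D := Lψ * L2r - Lt * Lg with hD
  have key : ∀ n : ℕ, 1 ≤ n → |D * n| ≤ Lg * L2r := by
    intro n hn
    set m := Nat.log 2 (t^n) with hm
    have hp1 : 2^m ≤ t^n := Nat.pow_log_le_self 2 (pow_ne_zero n (by omega))
    have hp2 : t^n < 2^(m+1) := Nat.lt_pow_succ_log_self (by norm_num) _
    have hp1R : (2:ℝ)^m ≤ (t:ℝ)^n := by exact_mod_cast hp1
    have hp2R : (t:ℝ)^n ≤ (2:ℝ)^(m+1) := by exact_mod_cast hp2.le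
    -- points
    have hmemA : δ/(t:ℝ)^n ∈ Icc (0:ℝ) δ :=
      ⟨by positivity, div_le_self hδpos.le (one_le_pow₀ (by linarith))⟩
    have hmemB : δ/(2:ℝ)^m ∈ Icc (0:ℝ) δ :=
      ⟨by positivity, div_le_self hδpos.le (one_le_pow₀ (by norm_num))⟩
    have hmemC : δ/(2:ℝ)^(m+1) ∈ Icc (0:ℝ) δ :=
      ⟨by positivity, div_le_self hδpos.le (one_le_pow₀ (by norm_num))⟩
    have hsub : Icc (0:ℝ) δ ⊆ Icc (0:ℝ) 1 := Icc_subset_Icc le_rfl hδ1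
    have hordAB : δ/(t:ℝ)^n ≤ δ/(2:ℝ)^m := by gcongr
    have hordCA : δ/(2:ℝ)^(m+1) ≤ δ/(t:ℝ)^n := by gcongr
    have hA : h (δ/(2:ℝ)^(m+1)) ≤ h (δ/(t:ℝ)^n) :=
      hmonoOn (hsub hmemC) (hsub hmemA) hordCA
    have hB : h (δ/(t:ℝ)^n) ≤ h (δ/(2:ℝ)^m) :=
      hmonoOn (hsub hmemA) (hsub hmemB) hordAB
    have heq1 := L1 m δ ⟨hδpos.le, le_rfl⟩
    have heq2 := L1 (m+1) δ ⟨hδpos.le, le_rfl⟩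
    have heq3 := L2 n δ ⟨hδpos.le, le_rfl⟩
    have hApos : 0 < h (δ/(t:ℝ)^n) := hpos _ (by positivity) (le_trans hmemA.2 hδ1)
    have hBpos : 0 < h (δ/(2:ℝ)^m) := hpos _ (by positivity) (le_trans hmemB.2 hδ1)
    have hCpos : 0 < h (δ/(2:ℝ)^(m+1)) := hpos _ (by positivity) (le_trans hmemC.2 hδ1)
    have hsgm : (0:ℝ) < sg^m := pow_pos hsgpos m
    have hsgm1 : (0:ℝ) < sg^(m+1) := pow_pos hsgpos (m+1)
    have hsψn : (0:ℝ) < sψ^n := pow_pos hsψpos n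
    have hineq1 : sg^m ≤ sψ^n := by
      have h1 : sψ^n * h (δ/(t:ℝ)^n) ≤ sψ^n * h (δ/(2:ℝ)^m) :=
        mul_le_mul_of_nonneg_left hB hsψn.le
      have e : sg^m * h (δ/(2:ℝ)^m) ≤ sψ^n * h (δ/(2:ℝ)^m) := by
        linarith [heq1, heq3]
      exact le_of_mul_le_mul_right e hBpos
    have hineq2 : sψ^n ≤ sg^(m+1) := by
      have h1 : sg^(m+1) * h (δ/(2:ℝ)^(m+1)) ≤ sg^(m+1) * h (δ/(t:ℝ)^n) :=
        mul_le_mul_of_nonneg_left hA hsgm1.le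
      have e : sψ^n * h (δ/(t:ℝ)^n) ≤ sg^(m+1) * h (δ/(t:ℝ)^n) := by
        linarith [heq2, heq3]
      exact le_of_mul_le_mul_right e hApos
    -- take logs
    have lg1 : (m:ℝ) * Lg ≤ (n:ℝ) * Lψ := by
      have := (Real.log_le_log_iff hsgm hsψn).mpr hineq1
      rwa [Real.log_pow, Real.log_pow] at this
    have lg2 : (n:ℝ) * Lψ ≤ ((m:ℝ)+1) * Lg := by
      have := (Real.log_le_log_iff hsψn hsgm1).mpr hineq2
      rw [Real.log_pow, Real.log_pow] at this
      push_cast at this ⊢; linarith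
    have lt1 : (m:ℝ) * L2r ≤ (n:ℝ) * Lt := by
      have := (Real.log_le_log_iff (by positivity) (by positivity)).mpr hp1R
      rwa [Real.log_pow, Real.log_pow] at this
    have lt2 : (n:ℝ) * Lt ≤ ((m:ℝ)+1) * L2r := by
      have := (Real.log_le_log_iff (by positivity) (by positivity)).mpr hp2R
      rw [Real.log_pow, Real.log_pow] at this
      push_cast at this ⊢; linarith
    rw [abs_le]
    constructor
    · have u1 : ((n:ℝ) * Lψ) * L2r ≥ ((m:ℝ) * Lg) * L2r :=
        mul_le_mul_of_nonneg_right lg1 hL2pos.le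
      have u2 : ((n:ℝ) * Lt) * Lg ≤ (((m:ℝ)+1) * L2r) * Lg :=
        mul_le_mul_of_nonneg_right lt2 hLgpos.le
      have e : D * n = ((n:ℝ) * Lψ) * L2r - ((n:ℝ) * Lt) * Lg := by rw [hD]; ring
      linarith [u1, u2, e]
    · have u1 : ((n:ℝ) * Lψ) * L2r ≤ (((m:ℝ)+1) * Lg) * L2r :=
        mul_le_mul_of_nonneg_right lg2 hL2pos.le
      have u2 : ((m:ℝ) * L2r) * Lg ≤ ((n:ℝ) * Lt) * Lg :=
        mul_le_mul_of_nonneg_right lt1 hLgpos.le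
      have e : D * n = ((n:ℝ) * Lψ) * L2r - ((n:ℝ) * Lt) * Lg := by rw [hD]; ring
      linarith [u1, u2, e]
  -- conclude D = 0
  have hDzero : D = 0 := by
    by_contra hne
    have habs : 0 < |D| := abs_pos.mpr hne
    obtain ⟨n, hn⟩ := exists_nat_gt ((Lg * L2r)/|D|)
    have hq0 : 0 < (Lg * L2r)/|D| := by positivity
    have hn1 : 1 ≤ n := by
      by_contra hc
      push_neg at hc
      interval_cases n
      simp at hn; linarith
    have hk := key n hn1
    rw [abs_mul, Nat.abs_cast] at hk
    have : Lg * L2r < |D| * n := by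
      calc Lg * L2r = |D| * ((Lg * L2r)/|D|) := by field_simp
        _ < |D| * n := by exact mul_lt_mul_of_pos_left hn habs
    linarith
  -- finish
  have hlogeq : Lψ = Lg * Real.logb 2 (t:ℝ) := by
    simp only [Real.logb, ← hLt, ← hL2r]
    rw [hD] at hDzero
    field_simp
    linarith
  rw [Real.rpow_def_of_pos hsgpos, ← hLg, ← hlogeq, hLψ, Real.exp_log hsψpos]
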